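/- Let 0 < a < b be real numbers. Then for every x ∈ (a,b], (b−a)·( 1/H(a,b) − 1/L(a,b) ) ≥ (x−a)·( 1/H(a,x) − 1/L(a,x) ), where H(u,v) = 2uv/(u+v) is the harmonic mean and L(u,v) = (v−u)/(log v − log u) is the logarithmic mean (with L(u,u) = u). Explicitly: (b−a)·( (a+b)/(2ab) − (log b − log a)/(b−a) ) ≥ (x−a)·( (a+x)/(2ax) − (log x − log a)/(x−a) ) for x ∈ (a,b). -/

import Mathlib

open Real

/-- Application (harmonic/logarithmic means): for `0 < a < b` and `x ∈ (a,b]`: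
`(b−a)·(1/H(a,b) − 1/L(a,b)) ≥ (x−a)·(1/H(a,x) − 1/L(a,x))`, explicitly
`(b−a)·((a+b)/(2ab) − (log b − log a)/(b−a)) ≥ (x−a)·((a+x)/(2ax) − (log x − log a)/(x−a))`. -/
theorem fejer_stmt_16 (a b : ℝ) (ha : 0 < a) (hab : a < b)
    (x : ℝ) (hx : x ∈ Set.Ioc a b) :
    (x - a) * ((a + x) / (2 * a * x) - (Real.log x - Real.log a) / (x - a))
      ≤ (b - a) * ((a + b) / (2 * a * b) - (Real.log b - Real.log a) / (b - a)) := by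
  obtain ⟨hax, hxb⟩ := hx
  have hx0 : 0 < x := ha.trans hax
  have hb0 : 0 < b := ha.trans hab
  set g : ℝ → ℝ := fun t => t / (2 * a) - a / (2 * t) - Real.log t with hg
  have hder : ∀ t, 0 < t → HasDerivAt g ((t - a) ^ 2 / (2 * a * t ^ 2)) t := by
    intro t ht0
    have h1 : HasDerivAt (fun s : ℝ => s / (2 * a)) (1 / (2 * a)) t := by
      simpa using (hasDerivAt_id t).div_const (2 * a)
    have h2 : HasDerivAt (fun s : ℝ => a / (2 * s)) ((0 * (2 * t) - a * 2) / (2 * t) ^ 2) t := by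
      refine (hasDerivAt_const t a).div ?_ (by positivity)
      simpa using (hasDerivAt_id t).const_mul (2 : ℝ)
    have h3 : HasDerivAt Real.log (1 / t) t := by
      simpa using Real.hasDerivAt_log (ne_of_gt ht0)
    have := (h1.sub h2).sub h3
    convert this using 1
    case e'_4 => rfl
    case e'_5 => rfl
    case e'_8 => rfl
    field_simp
    ring
  have hmono : MonotoneOn g (Set.Icc a b) := by
    apply monotoneOn_of_deriv_nonneg (convex_Icc a b)
    · intro t ht
      exact ((hder t (lt_of_lt_of_le ha ht.1)).continuousAt).continuousWithinAt
    · intro t ht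
      rw [interior_Icc] at ht
      exact ((hder t (ha.trans ht.1)).differentiableAt).differentiableWithinAt
    · intro t ht
      rw [interior_Icc] at ht
      have ht0 : 0 < t := ha.trans ht.1
      rw [(hder t ht0).deriv]
      positivity
  have hgle : g x ≤ g b := hmono ⟨le_of_lt hax, hxb⟩ ⟨le_of_lt hab, le_refl b⟩ hxb
  have hxa : x - a ≠ 0 := ne_of_gt (by linarith)
  have hba : b - a ≠ 0 := ne_of_gt (by linarith)
  have e1 : (x - a) * ((a + x) / (2 * a * x) - (Real.log x - Real.log a) / (x - a))
      = g x + Real.log a := by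
    simp only [hg]
    field_simp
    ring
  have e2 : (b - a) * ((a + b) / (2 * a * b) - (Real.log b - Real.log a) / (b - a))
      = g b + Real.log a := by
    simp only [hg]
    field_simp
    ring
  rw [e1, e2]
  linarith
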